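/- The Markov combination of probability measures is unique: if α and α′ are two probability measures on 𝒳_{A∪B} that both have marginal μ over A, marginal λ over B, and satisfy the conditional independence X_{A∖B} ⫫ X_{B∖A} | X_{A∩B}, then α = α′. -/

import Mathlib

open MeasureTheory ProbabilityTheory

/-- Uniqueness of the Markov combination: two probability measures on `𝒳_{A ∪ B}` with
marginal `μ` over `A`, marginal `λ` over `B`, and the conditional independence
`X_{A∖B} ⫫ X_{B∖A} ∣ X_{A∩B}` must coincide. -/
theorem markov_combination_unique
    {ι : Type*} [Countable ι] (X : ι → Type*) [∀ i, MeasurableSpace (X i)]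
    [∀ i, StandardBorelSpace (X i)]
    (A B : Set ι)
    (μ : Measure (∀ i : A, X i)) (lam : Measure (∀ i : B, X i))
    [IsProbabilityMeasure μ] [IsProbabilityMeasure lam]
    (hconsist :
      μ.map (fun x (i : (A ∩ B : Set ι)) => x (Set.inclusion Set.inter_subset_left i))
        = lam.map (fun x (i : (A ∩ B : Set ι)) => x (Set.inclusion Set.inter_subset_right i)))
    (α α' : Measure (∀ i : (A ∪ B : Set ι), X i))
    [IsProbabilityMeasure α] [IsProbabilityMeasure α']
    (hαA : α.map (fun x (i : A) => x (Set.inclusion Set.subset_union_left i)) = μ)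
    (hαB : α.map (fun x (i : B) => x (Set.inclusion Set.subset_union_right i)) = lam)
    (hα'A : α'.map (fun x (i : A) => x (Set.inclusion Set.subset_union_left i)) = μ)
    (hα'B : α'.map (fun x (i : B) => x (Set.inclusion Set.subset_union_right i)) = lam)
    (hCI : CondIndepFun
        (MeasurableSpace.comap
          (fun x : (∀ i : (A ∪ B : Set ι), X i) => fun i : (A ∩ B : Set ι) =>
            x (Set.inclusion (Set.inter_subset_left.trans Set.subset_union_left) i))
          inferInstance)
        (Measurable.comap_le (measurable_pi_lambda _ fun _ => measurable_pi_apply _))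
        (fun x (i : (A \ B : Set ι)) =>
          x (Set.inclusion ((Set.diff_subset).trans Set.subset_union_left) i))
        (fun x (i : (B \ A : Set ι)) =>
          x (Set.inclusion ((Set.diff_subset).trans Set.subset_union_right) i))
        α)
    (hCI' : CondIndepFun
        (MeasurableSpace.comap
          (fun x : (∀ i : (A ∪ B : Set ι), X i) => fun i : (A ∩ B : Set ι) =>
            x (Set.inclusion (Set.inter_subset_left.trans Set.subset_union_left) i))
          inferInstance)
        (Measurable.comap_le (measurable_pi_lambda _ fun _ => measurable_pi_apply _))
        (fun x (i : (A \ B : Set ι)) =>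
          x (Set.inclusion ((Set.diff_subset).trans Set.subset_union_left) i))
        (fun x (i : (B \ A : Set ι)) =>
          x (Set.inclusion ((Set.diff_subset).trans Set.subset_union_right) i))
        α') :
    α = α' := by
  classical
  -- The three inner projections from `Π_{A∪B}`.
  set f : (∀ i : (A ∪ B : Set ι), X i) → (∀ i : (A ∩ B : Set ι), X i) :=
    fun x i => x (Set.inclusion (Set.inter_subset_left.trans Set.subset_union_left) i) with hf_def
  set g : (∀ i : (A ∪ B : Set ι), X i) → (∀ i : (A \ B : Set ι), X i) :=
    fun x i => x (Set.inclusion ((Set.diff_subset).trans Set.subset_union_left) i) with hg_def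
  set h : (∀ i : (A ∪ B : Set ι), X i) → (∀ i : (B \ A : Set ι), X i) :=
    fun x i => x (Set.inclusion ((Set.diff_subset).trans Set.subset_union_right) i) with hh_def
  -- projections onto A, B, and from those onto the pieces
  set pA : (∀ i : (A ∪ B : Set ι), X i) → (∀ i : A, X i) :=
    fun x i => x (Set.inclusion Set.subset_union_left i) with hpA_def
  set pB : (∀ i : (A ∪ B : Set ι), X i) → (∀ i : B, X i) :=
    fun x i => x (Set.inclusion Set.subset_union_right i) with hpB_def
  have hABsub : (A ∩ B : Set ι) ⊆ A := Set.inter_subset_left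
  have hBAsub : (A ∩ B : Set ι) ⊆ B := Set.inter_subset_right
  set qAB : (∀ i : A, X i) → (∀ i : (A ∩ B : Set ι), X i) :=
    fun x i => x (Set.inclusion Set.inter_subset_left i) with hqAB_def
  set qBA : (∀ i : B, X i) → (∀ i : (A ∩ B : Set ι), X i) :=
    fun x i => x (Set.inclusion Set.inter_subset_right i) with hqBA_def
  set qAd : (∀ i : A, X i) → (∀ i : (A \ B : Set ι), X i) :=
    fun x i => x (Set.inclusion (Set.diff_subset) i) with hqAd_def
  set qBd : (∀ i : B, X i) → (∀ i : (B \ A : Set ι), X i) :=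
    fun x i => x (Set.inclusion (Set.diff_subset) i) with hqBd_def
  have mf : Measurable f := measurable_pi_lambda _ fun _ => measurable_pi_apply _
  have mg : Measurable g := measurable_pi_lambda _ fun _ => measurable_pi_apply _
  have mh : Measurable h := measurable_pi_lambda _ fun _ => measurable_pi_apply _
  have mpA : Measurable pA := measurable_pi_lambda _ fun _ => measurable_pi_apply _
  have mpB : Measurable pB := measurable_pi_lambda _ fun _ => measurable_pi_apply _
  have mqAB : Measurable qAB := measurable_pi_lambda _ fun _ => measurable_pi_apply _
  have mqBA : Measurable qBA := measurable_pi_lambda _ fun _ => measurable_pi_apply _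
  have mqAd : Measurable qAd := measurable_pi_lambda _ fun _ => measurable_pi_apply _
  have mqBd : Measurable qBd := measurable_pi_lambda _ fun _ => measurable_pi_apply _
  have hm' : MeasurableSpace.comap f inferInstance ≤ _ := mf.comap_le
  -- nonemptiness
  have hΩne : Nonempty (∀ i : (A ∪ B : Set ι), X i) := by
    by_contra hne
    rw [not_nonempty_iff] at hne
    have h1 : α Set.univ = 1 := measure_univ
    rw [Set.univ_eq_empty_iff.mpr hne, measure_empty] at h1
    exact one_ne_zero h1.symm
  obtain ⟨x0⟩ := hΩne
  have hUne : Nonempty (∀ i : (A \ B : Set ι), X i) := ⟨g x0⟩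
  have hVne : Nonempty (∀ i : (B \ A : Set ι), X i) := ⟨h x0⟩
  -- joint laws of (f, g), (f, h) and law of f agree for α and α'
  have hfg : α.map (fun a => (f a, g a)) = α'.map (fun a => (f a, g a)) := by
    have h1 : ∀ (β : Measure (∀ i : (A ∪ B : Set ι), X i)) [IsProbabilityMeasure β],
        β.map pA = μ → β.map (fun a => (f a, g a)) = μ.map (fun y => (qAB y, qAd y)) := by
      intro β _ hβ
      rw [← hβ, Measure.map_map (mqAB.prodMk mqAd) mpA]
      rfl
    rw [h1 α hαA, h1 α' hα'A]
  have hfh : α.map (fun a => (f a, h a)) = α'.map (fun a => (f a, h a)) := by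
    have h1 : ∀ (β : Measure (∀ i : (A ∪ B : Set ι), X i)) [IsProbabilityMeasure β],
        β.map pB = lam → β.map (fun a => (f a, h a)) = lam.map (fun y => (qBA y, qBd y)) := by
      intro β _ hβ
      rw [← hβ, Measure.map_map (mqBA.prodMk mqBd) mpB]
      rfl
    rw [h1 α hαB, h1 α' hα'B]
  have hρ : α.map f = α'.map f := by
    have h1 : ∀ (β : Measure (∀ i : (A ∪ B : Set ι), X i)) [IsProbabilityMeasure β],
        β.map pA = μ → β.map f = μ.map qAB := by
      intro β _ hβ
      rw [← hβ, Measure.map_map mqAB mpA]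
      rfl
    rw [h1 α hαA, h1 α' hα'A]
  -- conditional distributions agree
  have hκ₁ : condDistrib g f α' = condDistrib g f α := by
    rw [condDistrib, condDistrib]
    congr 1
    exact hfg.symm
  have hκ₂ : condDistrib h f α' = condDistrib h f α := by
    rw [condDistrib, condDistrib]
    congr 1
    exact hfh.symm
  set κ₁ := condDistrib g f α with hκ₁_def
  set κ₂ := condDistrib h f α with hκ₂_def
  set ρ := α.map f with hρ_def
  -- key computation of the measure of `f⁻¹ r ∩ g⁻¹ s ∩ h⁻¹ t`
  have key : ∀ (β : Measure (∀ i : (A ∪ B : Set ι), X i)) [IsProbabilityMeasure β],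
      CondIndepFun (MeasurableSpace.comap f inferInstance) hm' g h β →
      condDistrib g f β = κ₁ → condDistrib h f β = κ₂ → β.map f = ρ →
      ∀ r s t, MeasurableSet r → MeasurableSet s → MeasurableSet t →
        β (f ⁻¹' r ∩ g ⁻¹' s ∩ h ⁻¹' t)
          = ENNReal.ofReal (∫ x in r, (κ₁ x s).toReal * (κ₂ x t).toReal ∂ρ) := by
    intro β _ hci hk1 hk2 hmap r s t hr hs ht
    have hWmeas : MeasurableSet (g ⁻¹' s ∩ h ⁻¹' t) := (mg hs).inter (mh ht)
    have h_int : Integrable ((g ⁻¹' s ∩ h ⁻¹' t).indicator (fun _ => (1 : ℝ))) β :=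
      (integrable_const _).indicator hWmeas
    -- a.e. identity for the conditional expectation
    have hae : (β⟦g ⁻¹' s ∩ h ⁻¹' t | MeasurableSpace.comap f inferInstance⟧)
        =ᵐ[β] fun a => (κ₁ (f a) s).toReal * (κ₂ (f a) t).toReal := by
      have h1 := ((condIndepFun_iff_condExp_inter_preimage_eq_mul
        (m' := MeasurableSpace.comap f inferInstance) (hm' := hm') mg mh).mp hci) s t hs ht
      have h2 := condDistrib_ae_eq_condExp (μ := β) mf mg hs
      have h3 := condDistrib_ae_eq_condExp (μ := β) mf mh ht
      rw [hk1] at h2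
      rw [hk2] at h3
      filter_upwards [h1, h2, h3] with a ha1 ha2 ha3
      simp only [measureReal_def] at ha2 ha3
      rw [ha1, ← ha2, ← ha3]
    have hFmeas : Measurable fun x => (κ₁ x s).toReal * (κ₂ x t).toReal :=
      ((κ₁.measurable_coe hs).ennreal_toReal).mul ((κ₂.measurable_coe ht).ennreal_toReal)
    have hcalc : ∫ a in f ⁻¹' r, (g ⁻¹' s ∩ h ⁻¹' t).indicator (fun _ => (1 : ℝ)) a ∂β
        = ∫ x in r, (κ₁ x s).toReal * (κ₂ x t).toReal ∂ρ := by
      rw [← setIntegral_condExp hm' h_int ⟨r, hr, rfl⟩]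
      rw [setIntegral_congr_ae (mf hr) ((hae.mono fun a ha => fun _ => ha))]
      rw [← hmap, setIntegral_map hr hFmeas.aestronglyMeasurable mf.aemeasurable]
    have hind : ∫ a in f ⁻¹' r, (g ⁻¹' s ∩ h ⁻¹' t).indicator (fun _ => (1 : ℝ)) a ∂β
        = (β (f ⁻¹' r ∩ g ⁻¹' s ∩ h ⁻¹' t)).toReal := by
      rw [integral_indicator_const (1 : ℝ) hWmeas, measureReal_def, Measure.restrict_apply hWmeas, smul_eq_mul,
        mul_one]
      congr 1
      rw [Set.inter_comm, Set.inter_assoc]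
    rw [← hcalc, hind, ENNReal.ofReal_toReal (measure_ne_top β _)]
  -- the generating π-system
  set C : Set (Set (∀ i : (A ∪ B : Set ι), X i)) :=
    {w | ∃ r s t, MeasurableSet r ∧ MeasurableSet s ∧ MeasurableSet t ∧
      w = f ⁻¹' r ∩ g ⁻¹' s ∩ h ⁻¹' t} with hC_def
  have hpi : IsPiSystem C := by
    rintro _ ⟨r, s, t, hr, hs, ht, rfl⟩ _ ⟨r', s', t', hr', hs', ht', rfl⟩ -
    refine ⟨r ∩ r', s ∩ s', t ∩ t', hr.inter hr', hs.inter hs', ht.inter ht', ?_⟩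
    simp only [Set.preimage_inter]
    ext a
    simp only [Set.mem_inter_iff]
    tauto
  have hgen : (inferInstance : MeasurableSpace (∀ i : (A ∪ B : Set ι), X i))
      = MeasurableSpace.generateFrom C := by
    refine le_antisymm ?_ ?_
    · -- pi σ-algebra ≤ generated
      have hf_le : MeasurableSpace.comap f inferInstance ≤ MeasurableSpace.generateFrom C := by
        rintro _ ⟨r, hr, rfl⟩
        refine MeasurableSpace.measurableSet_generateFrom
          ⟨r, Set.univ, Set.univ, hr, MeasurableSet.univ, MeasurableSet.univ, by simp⟩
      have hg_le : MeasurableSpace.comap g inferInstance ≤ MeasurableSpace.generateFrom C := by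
        rintro _ ⟨s, hs, rfl⟩
        refine MeasurableSpace.measurableSet_generateFrom
          ⟨Set.univ, s, Set.univ, MeasurableSet.univ, hs, MeasurableSet.univ, by simp⟩
      have hh_le : MeasurableSpace.comap h inferInstance ≤ MeasurableSpace.generateFrom C := by
        rintro _ ⟨t, ht, rfl⟩
        refine MeasurableSpace.measurableSet_generateFrom
          ⟨Set.univ, Set.univ, t, MeasurableSet.univ, MeasurableSet.univ, ht, by simp⟩
      rw [show (inferInstance : MeasurableSpace (∀ i : (A ∪ B : Set ι), X i))
          = MeasurableSpace.pi from rfl]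
      refine iSup_le fun i => ?_
      obtain ⟨i, hi⟩ := i
      by_cases hiA : i ∈ A
      · by_cases hiB : i ∈ B
        · have heq : (fun x : (∀ j : (A ∪ B : Set ι), X j) => x ⟨i, hi⟩)
              = (fun y : (∀ j : (A ∩ B : Set ι), X j) => y ⟨i, ⟨hiA, hiB⟩⟩) ∘ f := rfl
          calc MeasurableSpace.comap (fun x : (∀ j : (A ∪ B : Set ι), X j) => x ⟨i, hi⟩)
                (inferInstance : MeasurableSpace (X i))
              = (MeasurableSpace.comap (fun y : (∀ j : (A ∩ B : Set ι), X j) => y ⟨i, ⟨hiA, hiB⟩⟩)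
                  inferInstance).comap f := by rw [MeasurableSpace.comap_comp, heq]
            _ ≤ MeasurableSpace.comap f inferInstance :=
                MeasurableSpace.comap_mono (measurable_pi_apply _).comap_le
            _ ≤ MeasurableSpace.generateFrom C := hf_le
        · have heq : (fun x : (∀ j : (A ∪ B : Set ι), X j) => x ⟨i, hi⟩)
              = (fun y : (∀ j : (A \ B : Set ι), X j) => y ⟨i, ⟨hiA, hiB⟩⟩) ∘ g := rfl
          calc MeasurableSpace.comap (fun x : (∀ j : (A ∪ B : Set ι), X j) => x ⟨i, hi⟩)
                (inferInstance : MeasurableSpace (X i))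
              = (MeasurableSpace.comap (fun y : (∀ j : (A \ B : Set ι), X j) => y ⟨i, ⟨hiA, hiB⟩⟩)
                  inferInstance).comap g := by rw [MeasurableSpace.comap_comp, heq]
            _ ≤ MeasurableSpace.comap g inferInstance :=
                MeasurableSpace.comap_mono (measurable_pi_apply _).comap_le
            _ ≤ MeasurableSpace.generateFrom C := hg_le
      · have hiB : i ∈ B := hi.resolve_left hiA
        have heq : (fun x : (∀ j : (A ∪ B : Set ι), X j) => x ⟨i, hi⟩)
            = (fun y : (∀ j : (B \ A : Set ι), X j) => y ⟨i, ⟨hiB, hiA⟩⟩) ∘ h := rfl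
        calc MeasurableSpace.comap (fun x : (∀ j : (A ∪ B : Set ι), X j) => x ⟨i, hi⟩)
              (inferInstance : MeasurableSpace (X i))
            = (MeasurableSpace.comap (fun y : (∀ j : (B \ A : Set ι), X j) => y ⟨i, ⟨hiB, hiA⟩⟩)
                inferInstance).comap h := by rw [MeasurableSpace.comap_comp, heq]
          _ ≤ MeasurableSpace.comap h inferInstance :=
              MeasurableSpace.comap_mono (measurable_pi_apply _).comap_le
          _ ≤ MeasurableSpace.generateFrom C := hh_le
    · refine MeasurableSpace.generateFrom_le ?_
      rintro _ ⟨r, s, t, hr, hs, ht, rfl⟩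
      exact ((mf hr).inter (mg hs)).inter (mh ht)
  refine ext_of_generate_finite C hgen hpi ?_ (by simp)
  rintro _ ⟨r, s, t, hr, hs, ht, rfl⟩
  rw [key α hCI rfl rfl rfl r s t hr hs ht, key α' hCI' hκ₁ hκ₂ hρ.symm r s t hr hs ht]
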